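/- If v : G → B is a partial *-representation of a group G in a unital C*-algebra B, and for each t ∈ G one sets e(t) := v(t)v(t)*, then the projections e(s) and e(t) commute for all s, t ∈ G, and v(s)e(t) = e(st)v(s) for all s, t ∈ G. -/
import Mathlib


/-- If `v : G → B` is a partial *-representation of a group `G` in a unital C*-algebra `B`
and `e t := v t * (v t)*` denotes the range projection of `v t`, then the projections
`e s` and `e t` commute, and `v s * e t = e (s*t) * v s` for all `s, t ∈ G`. -/
theorem partialRep_range_projections {G B : Type*} [Group G] [CStarAlgebra B]
    (v : G → B) (hone : v 1 = 1) (hstar : ∀ t : G, v t⁻¹ = star (v t))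
    (hrel : ∀ s t : G, v s⁻¹ * v s * v t = v s⁻¹ * v (s * t))
    (e : G → B) (he : ∀ t : G, e t = v t * star (v t)) :
    (∀ s t : G, e s * e t = e t * e s) ∧ (∀ s t : G, v s * e t = e (s * t) * v s) := by
  have hstar' : ∀ t : G, star (v t) = v t⁻¹ := fun t => (hstar t).symm
  have hsa : ∀ t : G, star (e t) = e t := by
    intro t; rw [he, star_mul, star_star]
  have hrel' : ∀ s t : G, v s * v t * v t⁻¹ = v (s * t) * v t⁻¹ := by
    intro s t
    have h := hrel t⁻¹ s⁻¹
    rw [inv_inv] at h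
    have h2 := congrArg star h
    simpa [star_mul, hstar', mul_assoc, mul_inv_rev] using h2
  have key : ∀ s t : G, v s * e t = e (s * t) * v s := by
    intro s t
    have h1 : v s * e t = v (s * t) * v t⁻¹ := by
      rw [he, hstar', ← mul_assoc, hrel' s t]
    have h2 : e (s * t) * v s = v (s * t) * v t⁻¹ := by
      have h := hrel (s * t)⁻¹ s
      rw [inv_inv] at h
      have h3 : (s * t)⁻¹ * s = t⁻¹ := by group
      rw [h3] at h
      rw [he, hstar', h]
    rw [h1, h2]
  refine ⟨?_, key⟩
  intro s t
  have h1 : e s * e t = v s * (e (s⁻¹ * t) * v s⁻¹) := by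
    rw [← key s⁻¹ t, he s, hstar', mul_assoc]
  have h2 := congrArg star h1
  simp only [star_mul, hsa, hstar', star_star, inv_inv] at h2
  rw [h1, h2]; exact (mul_assoc _ _ _).symm
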